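/- If the colour permutation σ on m colours is a single m-cycle and m is odd, then any two triangulations T1, T2 of a convex polygon, each with all triangles given the same colour (the first colour in the cycle), are connected by a sequence of σ-flips: replacing each uncoloured flip in a flip sequence between T1 and T2 by m consecutive σ-flips at the same diagonal yields a valid σ-flip sequence. -/

import Mathlib

namespace PolyFlip


/-- Two vertices of the convex `N`-gon are consecutive along the boundary. -/
def BdryAdj (N : ℕ) (i j : Fin N) : Prop :=
  (i.val + 1) % N = j.val ∨ (j.val + 1) % N = i.val

/-- `d` is a diagonal of the convex `N`-gon: an unordered pair of distinct,
non-consecutive vertices. -/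
def IsDiag (N : ℕ) (d : Finset (Fin N)) : Prop :=
  ∃ i j : Fin N, i ≠ j ∧ ¬ BdryAdj N i j ∧ d = {i, j}

/-- The chord `d` crosses the chord `e` (in this orientation): the endpoints
interlace in the cyclic (here: linear) order of the polygon's vertices. -/
def Crosses {N : ℕ} (d e : Finset (Fin N)) : Prop :=
  ∃ a b c f : Fin N, d = {a, b} ∧ e = {c, f} ∧ a < c ∧ c < b ∧ b < f

/-- A triangulation of the convex `N`-gon: a maximal set of pairwise
non-crossing diagonals. -/
structure Triangulation (N : ℕ) where
  diags : Finset (Finset (Fin N))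
  isDiag : ∀ d ∈ diags, IsDiag N d
  noncross : ∀ d ∈ diags, ∀ e ∈ diags, ¬ Crosses d e
  maximal : ∀ d, IsDiag N d → (∀ e ∈ diags, ¬ Crosses d e ∧ ¬ Crosses e d) → d ∈ diags

/-- `a` and `b` are joined by an edge of the triangulated polygon:
either a boundary edge, or a diagonal of the triangulation. -/
def IsEdge {N : ℕ} (T : Triangulation N) (a b : Fin N) : Prop :=
  a ≠ b ∧ (BdryAdj N a b ∨ ({a, b} : Finset (Fin N)) ∈ T.diags)

/-- `t` is a triangle (face) of the triangulation `T`. -/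
def IsTriangle {N : ℕ} (T : Triangulation N) (t : Finset (Fin N)) : Prop :=
  ∃ a b c : Fin N, a ≠ b ∧ a ≠ c ∧ b ≠ c ∧ t = {a, b, c} ∧
    IsEdge T a b ∧ IsEdge T a c ∧ IsEdge T b c

/-- A coloured triangulation: a triangulation together with a colour in
`Fin m` for each of its triangles. -/
structure ColouredTri (N m : ℕ) where
  T : Triangulation N
  col : {t : Finset (Fin N) // IsTriangle T t} → Fin m

/-- The degree of a vertex `x` in the triangulated polygon. -/
noncomputable def degree {N : ℕ} (T : Triangulation N) (x : Fin N) : ℕ :=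
  Nat.card {y : Fin N // IsEdge T x y}

/-- The `σ`-flip at the diagonal `d`: `d = {a,b}` is a diagonal of `C` whose two
incident triangles `{a,b,x}` and `{a,b,y}` have the same colour `i`; it is replaced by
the other diagonal `{x,y}` of the quadrilateral, the two new triangles `{a,x,y}` and
`{b,x,y}` get colour `σ i`, and all other triangles keep their colours. -/
def SFlipAt {N m : ℕ} (σ : Equiv.Perm (Fin m)) (d : Finset (Fin N))
    (C C' : ColouredTri N m) : Prop :=
  ∃ (a b x y : Fin N) (h₁ : IsTriangle C.T {a, b, x}) (h₂ : IsTriangle C.T {a, b, y})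
    (h₁' : IsTriangle C'.T {a, x, y}) (h₂' : IsTriangle C'.T {b, x, y}),
    d = {a, b} ∧ d ∈ C.T.diags ∧ x ≠ y ∧
    C.col ⟨{a, b, x}, h₁⟩ = C.col ⟨{a, b, y}, h₂⟩ ∧
    C'.T.diags = insert {x, y} (C.T.diags.erase d) ∧
    C'.col ⟨{a, x, y}, h₁'⟩ = σ (C.col ⟨{a, b, x}, h₁⟩) ∧
    C'.col ⟨{b, x, y}, h₂'⟩ = σ (C.col ⟨{a, b, x}, h₁⟩) ∧
    ∀ (t : Finset (Fin N)) (ht : IsTriangle C.T t) (ht' : IsTriangle C'.T t),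
      t ≠ {a, b, x} → t ≠ {a, b, y} → C'.col ⟨t, ht'⟩ = C.col ⟨t, ht⟩

/-- The `σ`-flip relation. -/
def SFlip {N m : ℕ} (σ : Equiv.Perm (Fin m)) (C C' : ColouredTri N m) : Prop :=
  ∃ d, SFlipAt σ d C C'

/-- The 2-coloured flip at a diagonal (the colour permutation swaps the two colours). -/
abbrev Flip2At {N : ℕ} (d : Finset (Fin N)) (C C' : ColouredTri N 2) : Prop :=
  SFlipAt (finRotate 2) d C C'

/-- The 2-coloured flip relation. -/
abbrev Flip2 {N : ℕ} (C C' : ColouredTri N 2) : Prop :=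
  SFlip (finRotate 2) C C'

/-- The 2-coloured flip graph of the convex `N`-gon: vertices are the 2-coloured
triangulations, edges are single 2-coloured flips. -/
def flipGraph (N : ℕ) : SimpleGraph (ColouredTri N 2) where
  Adj C C' := C ≠ C' ∧ (Flip2 C C' ∨ Flip2 C' C)
  symm := ⟨fun C C' h => ⟨h.1.symm, h.2.symm⟩⟩
  loopless := ⟨fun C h => h.1 rfl⟩

/-- The sign (`+1` for colour `0`, `-1` for colour `1`) of a colour, in `ZMod 3`. -/
def signVal (c : Fin 2) : ZMod 3 := if c = 0 then 1 else -1

/-- The weight of a vertex `x`: the sum, modulo 3, of the signs of all triangles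
incident with `x`. -/
noncomputable def weight {N : ℕ} (C : ColouredTri N 2) (x : Fin N) : ZMod 3 :=
  ∑ᶠ t : {t : Finset (Fin N) // IsTriangle C.T t},
    if x ∈ t.val then signVal (C.col t) else 0

/-- The number of triangles coloured `+1` (colour `0`). -/
noncomputable def plusCount {N : ℕ} (C : ColouredTri N 2) : ℕ :=
  Nat.card {t : {t : Finset (Fin N) // IsTriangle C.T t} // C.col t = 0}

/-- Adjacency in the `k`-dimensional hypercube: the two vertices differ in
exactly one coordinate. -/
def cubeAdj (k : ℕ) (u v : Fin k → Bool) : Prop := ∃! i, u i ≠ v i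

/-- The `k`-dimensional hypercube graph on `{0,1}^k`. -/
def cubeGraph (k : ℕ) : SimpleGraph (Fin k → Bool) where
  Adj := cubeAdj k
  symm := by
    constructor
    rintro u v ⟨i, hi, hu⟩
    exact ⟨i, hi.symm, fun j hj => hu j hj.symm⟩
  loopless := by
    constructor
    rintro u ⟨i, hi, -⟩
    exact hi rfl

/-- `f` exhibits a `k`-dimensional hypercube inside the connected component of `C`
in the 2-coloured flip graph. -/
def CubeEmb {N : ℕ} (C : ColouredTri N 2) (k : ℕ)
    (f : (Fin k → Bool) → ColouredTri N 2) : Prop :=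
  Function.Injective f ∧
  (∀ u v, cubeAdj k u v → (flipGraph N).Adj (f u) (f v)) ∧
  ∀ u, (flipGraph N).Reachable C (f u)

/-- `G` contains a subdivision (topological copy) of `H`: there are branch vertices
`f w` for the vertices `w` of `H` and internally disjoint paths in `G` between them
realising the edges of `H`. -/
def ContainsSubdivision {V W : Type*} (G : SimpleGraph V) (H : SimpleGraph W) : Prop :=
  ∃ f : W → V, Function.Injective f ∧
    ∃ P : ∀ u v : W, H.Adj u v → G.Walk (f u) (f v),
      (∀ u v (h : H.Adj u v), (P u v h).IsPath) ∧
      (∀ u v (h : H.Adj u v) (w : W), f w ∈ (P u v h).support → w = u ∨ w = v) ∧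
      (∀ u₁ v₁ (h₁ : H.Adj u₁ v₁) u₂ v₂ (h₂ : H.Adj u₂ v₂),
        (s(u₁, v₁) : Sym2 W) ≠ s(u₂, v₂) →
        ∀ x, x ∈ (P u₁ v₁ h₁).support → x ∈ (P u₂ v₂ h₂).support →
          (x = f u₁ ∨ x = f v₁) ∧ (x = f u₂ ∨ x = f v₂))

/-- Planarity, via Kuratowski's characterisation: a graph is planar iff it contains
no subdivision of `K₅` and no subdivision of `K₃,₃`. -/
def IsPlanar {V : Type*} (G : SimpleGraph V) : Prop :=
  ¬ ContainsSubdivision G (SimpleGraph.completeGraph (Fin 5)) ∧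
  ¬ ContainsSubdivision G (completeBipartiteGraph (Fin 3) (Fin 3))


section Helpers
variable {N : ℕ}

open Finset

lemma pair_eq_cases {α : Type*} [DecidableEq α] {u v A B : α}
    (h : ({u, v} : Finset α) = {A, B}) (huv : u ≠ v) :
    (u = A ∧ v = B) ∨ (u = B ∧ v = A) := by
  have hu : u ∈ ({A, B} : Finset α) := h ▸ (by simp)
  have hv : v ∈ ({A, B} : Finset α) := h ▸ (by simp)
  simp only [Finset.mem_insert, Finset.mem_singleton] at hu hv
  rcases hu with rfl | rfl <;> rcases hv with rfl | rfl <;> tauto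

lemma crosses_pattern {u v p q : Fin N} (huv : u < v) (hpq : p < q)
    (h : Crosses ({u, v} : Finset (Fin N)) {p, q}) : u < p ∧ p < v ∧ v < q := by
  obtain ⟨A, B, C, F, h1, h2, hAC, hCB, hBF⟩ := h
  rcases pair_eq_cases h1 (ne_of_lt huv) with ⟨rfl, rfl⟩ | ⟨rfl, rfl⟩
  · rcases pair_eq_cases h2 (ne_of_lt hpq) with ⟨rfl, rfl⟩ | ⟨rfl, rfl⟩
    · exact ⟨hAC, hCB, hBF⟩
    · exact absurd (hCB.trans hBF) (not_lt.mpr hpq.le)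
  · exact absurd (hAC.trans hCB) (not_lt.mpr huv.le)

/-- Symmetric crossing relation. -/
def CrossG (d e : Finset (Fin N)) : Prop := Crosses d e ∨ Crosses e d

lemma crossG_iff {u v p q : Fin N} (huv : u < v) (hpq : p < q) :
    CrossG ({u, v} : Finset (Fin N)) {p, q} ↔
      ((u < p ∧ p < v ∧ v < q) ∨ (p < u ∧ u < q ∧ q < v)) := by
  constructor
  · rintro (h | h)
    · exact Or.inl (crosses_pattern huv hpq h)
    · exact Or.inr (crosses_pattern hpq huv h)
  · rintro (⟨h1, h2, h3⟩ | ⟨h1, h2, h3⟩)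
    · exact Or.inl ⟨u, v, p, q, rfl, rfl, h1, h2, h3⟩
    · exact Or.inr ⟨p, q, u, v, rfl, rfl, h1, h2, h3⟩

lemma noncrossG {T : Triangulation N} {d e : Finset (Fin N)}
    (hd : d ∈ T.diags) (he : e ∈ T.diags) : ¬ CrossG d e := by
  rintro (h | h)
  · exact T.noncross d hd e he h
  · exact T.noncross e he d hd h

lemma succ_mod_eq {i : Fin N} {j : Fin N} :
    (i.val + 1) % N = j.val ↔ (i.val + 1 = j.val ∨ (i.val = N - 1 ∧ j.val = 0)) := by
  have hi := i.isLt; have hj := j.isLt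
  rcases Nat.lt_or_ge (i.val + 1) N with h | h
  · rw [Nat.mod_eq_of_lt h]; omega
  · have hiN : i.val + 1 = N := by omega
    rw [hiN, Nat.mod_self]; omega

lemma bdry_val {i j : Fin N} :
    BdryAdj N i j ↔ (i.val + 1 = j.val ∨ (i.val = N - 1 ∧ j.val = 0)
      ∨ j.val + 1 = i.val ∨ (j.val = N - 1 ∧ i.val = 0)) := by
  unfold BdryAdj
  rw [succ_mod_eq, succ_mod_eq]
  tauto

lemma isEdge_symm {T : Triangulation N} {a b : Fin N} (h : IsEdge T a b) :
    IsEdge T b a := by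
  obtain ⟨h1, h2 | h2⟩ := h
  · exact ⟨h1.symm, Or.inl (Or.symm h2)⟩
  · exact ⟨h1.symm, Or.inr (Finset.pair_comm a b ▸ h2)⟩

lemma isDiag_pair {d : Finset (Fin N)} (h : IsDiag N d) :
    ∃ p q : Fin N, p < q ∧ ¬ BdryAdj N p q ∧ d = {p, q} := by
  obtain ⟨i, j, hne, hb, rfl⟩ := h
  rcases lt_or_gt_of_ne hne with h | h
  · exact ⟨i, j, h, hb, rfl⟩
  · exact ⟨j, i, h, fun hc => hb (Or.symm hc), Finset.pair_comm i j⟩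

lemma tri_edges {T : Triangulation N} {t : Finset (Fin N)} (h : IsTriangle T t)
    {u v : Fin N} (hu : u ∈ t) (hv : v ∈ t) (huv : u ≠ v) : IsEdge T u v := by
  obtain ⟨p, q, r, h1, h2, h3, rfl, e1, e2, e3⟩ := h
  simp only [Finset.mem_insert, Finset.mem_singleton] at hu hv
  rcases hu with rfl | rfl | rfl <;> rcases hv with rfl | rfl | rfl <;>
    first
      | exact absurd rfl huv
      | exact e1 | exact e2 | exact e3
      | exact isEdge_symm e1 | exact isEdge_symm e2 | exact isEdge_symm e3

lemma notbdry_of_mem {T : Triangulation N} {a b : Fin N}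
    (h : ({a, b} : Finset (Fin N)) ∈ T.diags) (hab : a ≠ b) : ¬ BdryAdj N a b := by
  obtain ⟨i, j, hne, hb, he⟩ := T.isDiag _ h
  rcases pair_eq_cases he hab with ⟨rfl, rfl⟩ | ⟨rfl, rfl⟩
  · exact hb
  · exact fun hc => hb (Or.symm hc)

lemma triangulation_ext {T₁ T₂ : Triangulation N} (h : T₁.diags = T₂.diags) :
    T₁ = T₂ := by
  cases T₁; cases T₂
  simp only at h
  subst h
  rfl

lemma nocross_shared {z : Fin N} (hz : z.val = 0) {d e : Finset (Fin N)}
    (hzd : z ∈ d) (hze : z ∈ e) : ¬ Crosses d e := by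
  rintro ⟨A, B, C, F, h1, h2, o1, o2, o3⟩
  subst h1; subst h2
  simp only [Finset.mem_insert, Finset.mem_singleton] at hzd hze
  have hA := A.isLt
  rcases hzd with rfl | rfl
  · rcases hze with rfl | rfl
    · exact absurd o1 (lt_irrefl _)
    · have := o2.trans o3
      simp [Fin.lt_def, hz] at this
  · have := o1.trans o2
    simp [Fin.lt_def, hz] at this

end Helpers


section Apex
variable {N : ℕ}

lemma exists_inner_apex (T : Triangulation N) {a b : Fin N}
    (hab : ({a, b} : Finset (Fin N)) ∈ T.diags) (hab2 : a.val + 2 ≤ b.val) :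
    ∃ x : Fin N, a < x ∧ x < b ∧ IsEdge T a x ∧ IsEdge T x b := by
  classical
  have hbN := b.isLt
  have hab' : a < b := by rw [Fin.lt_def]; omega
  set S : Finset (Fin N) :=
    Finset.univ.filter (fun v => a < v ∧ v < b ∧ IsEdge T a v) with hS
  have hSne : S.Nonempty := by
    refine ⟨⟨a.val + 1, by omega⟩, ?_⟩
    simp only [hS, Finset.mem_filter, Finset.mem_univ, true_and]
    refine ⟨by rw [Fin.lt_def]; simp, by rw [Fin.lt_def]; simp; omega, ?_, Or.inl (Or.inl ?_)⟩
    · intro h; have := congrArg Fin.val h; simp at this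
    · show (a.val + 1) % N = a.val + 1
      exact Nat.mod_eq_of_lt (by omega)
  set x := S.max' hSne with hxdef
  have hxS : x ∈ S := S.max'_mem hSne
  have hmax : ∀ v ∈ S, v ≤ x := fun v hv => S.le_max' v hv
  rw [hS, Finset.mem_filter] at hxS
  obtain ⟨-, hax, hxb, eax⟩ := hxS
  have vax : a.val < x.val := hax
  have vxb : x.val < b.val := hxb
  refine ⟨x, hax, hxb, eax, ?_⟩
  by_cases hbd : BdryAdj N x b
  · exact ⟨ne_of_lt hxb, Or.inl hbd⟩
  refine ⟨ne_of_lt hxb, Or.inr ?_⟩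
  refine T.maximal _ ⟨x, b, ne_of_lt hxb, hbd, rfl⟩ ?_
  intro e he
  suffices h : ¬ CrossG ({x, b} : Finset (Fin N)) e by
    exact ⟨fun hc => h (Or.inl hc), fun hc => h (Or.inr hc)⟩
  obtain ⟨p, q, hpq, hbpq, rfl⟩ := isDiag_pair (T.isDiag e he)
  rw [crossG_iff hxb hpq]
  rintro (⟨h1, h2, h3⟩ | ⟨h1, h2, h3⟩)
  · exact noncrossG hab he ((crossG_iff hab' hpq).mpr (Or.inl ⟨hax.trans h1, h2, h3⟩))
  · rcases lt_trichotomy p a with hpa | hpa | hpa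
    · exact noncrossG hab he ((crossG_iff hab' hpq).mpr (Or.inr ⟨hpa, hax.trans h2, h3⟩))
    · subst hpa
      have hqS : q ∈ S := by
        simp only [hS, Finset.mem_filter, Finset.mem_univ, true_and]
        exact ⟨hpq, h3, ne_of_lt hpq, Or.inr he⟩
      exact absurd (hmax q hqS) (not_le.mpr h2)
    · rcases eax with ⟨hne, hbd2 | hmem⟩
      · rw [bdry_val] at hbd2
        have v1 : a.val < p.val := hpa
        have v2 : p.val < x.val := h1
        omega
      · exact noncrossG hmem he ((crossG_iff hax hpq).mpr (Or.inl ⟨hpa, h1, h2⟩))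

lemma exists_outer_apex (T : Triangulation N) {a b : Fin N}
    (hab : ({a, b} : Finset (Fin N)) ∈ T.diags) (ha1 : 1 ≤ a.val)
    (hab2 : a.val + 2 ≤ b.val) :
    ∃ y : Fin N, (y < a ∨ b < y) ∧ IsEdge T a y ∧ IsEdge T b y := by
  classical
  have hbN := b.isLt
  have hab' : a < b := by rw [Fin.lt_def]; omega
  set key : Fin N → ℕ := fun v => (v.val + N - b.val) % N with hkey
  have keylt : ∀ v : Fin N, v < a → key v = v.val + N - b.val := by
    intro v hv; have := v.isLt; have hv' : v.val < a.val := hv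
    exact Nat.mod_eq_of_lt (by omega)
  have keygt : ∀ v : Fin N, b < v → key v = v.val - b.val := by
    intro v hv; have := v.isLt; have hv' : b.val < v.val := hv
    have h1 : v.val + N - b.val = (v.val - b.val) + N := by omega
    show (v.val + N - b.val) % N = v.val - b.val
    rw [h1, Nat.add_mod_right]
    exact Nat.mod_eq_of_lt (by omega)
  set S := Finset.univ.filter (fun v => (v < a ∨ b < v) ∧ IsEdge T b v) with hS
  have hSne : S.Nonempty := by
    rcases Nat.lt_or_ge (b.val + 1) N with h | h
    · refine ⟨⟨b.val + 1, h⟩, ?_⟩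
      simp only [hS, Finset.mem_filter, Finset.mem_univ, true_and]
      refine ⟨Or.inr (by rw [Fin.lt_def]; simp), ?_, Or.inl (Or.inl ?_)⟩
      · intro hc; have := congrArg Fin.val hc; simp at this
      · show (b.val + 1) % N = b.val + 1; exact Nat.mod_eq_of_lt h
    · refine ⟨⟨0, by omega⟩, ?_⟩
      simp only [hS, Finset.mem_filter, Finset.mem_univ, true_and]
      refine ⟨Or.inl (by rw [Fin.lt_def]; simp; omega), ?_, Or.inl (Or.inl ?_)⟩
      · intro hc; have := congrArg Fin.val hc; simp at this; omega
      · show (b.val + 1) % N = 0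
        have hb1 : b.val + 1 = N := by omega
        rw [hb1, Nat.mod_self]
  obtain ⟨y, hyS, hymax⟩ := S.exists_max_image key hSne
  rw [hS, Finset.mem_filter] at hyS
  obtain ⟨-, hy, eby⟩ := hyS
  have hay : a ≠ y := by
    rcases hy with h | h
    · exact ne_of_gt h
    · exact ne_of_lt (hab'.trans h)
  refine ⟨y, hy, ?_, eby⟩
  by_cases hbd : BdryAdj N a y
  · exact ⟨hay, Or.inl hbd⟩
  refine ⟨hay, Or.inr (T.maximal _ ⟨a, y, hay, hbd, rfl⟩ ?_)⟩
  intro e he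
  suffices h : ¬ CrossG ({a, y} : Finset (Fin N)) e by
    exact ⟨fun hc => h (Or.inl hc), fun hc => h (Or.inr hc)⟩
  obtain ⟨p, q, hpq, hbpq, rfl⟩ := isDiag_pair (T.isDiag e he)
  obtain ⟨hby_ne, hby⟩ := eby
  have vpq : p.val < q.val := hpq
  have vqN := q.isLt
  have vpN := p.isLt
  rcases hy with hya | hby'
  · -- y < a
    have vya : y.val < a.val := hya
    rw [show ({a, y} : Finset (Fin N)) = {y, a} from Finset.pair_comm a y,
      crossG_iff hya hpq]
    rintro (⟨h1, h2, h3⟩ | ⟨h1, h2, h3⟩)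
    · rcases lt_trichotomy q b with hqb | hqb | hqb
      · exact noncrossG hab he ((crossG_iff hab' hpq).mpr (Or.inr ⟨h2, h3, hqb⟩))
      · rw [hqb] at he hpq
        have hpS : p ∈ S := by
          simp only [hS, Finset.mem_filter, Finset.mem_univ, true_and]
          exact ⟨Or.inl h2, (ne_of_lt hpq).symm, Or.inr (Finset.pair_comm p b ▸ he)⟩
        have k1 := keylt p h2
        have k2 := keylt y hya
        have hk := hymax p hpS
        have v1 : y.val < p.val := h1
        have v2 : p.val < a.val := h2
        omega
      · rcases hby with hb2 | hb2
        · rw [bdry_val] at hb2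
          have v1 : b.val < q.val := hqb
          have v2 : y.val < p.val := h1
          have v3 : p.val < a.val := h2
          omega
        · have hyb : y < b := hya.trans hab'
          exact noncrossG (Finset.pair_comm b y ▸ hb2) he
            ((crossG_iff hyb hpq).mpr (Or.inl ⟨h1, h2.trans hab', hqb⟩))
    · rcases hby with hb2 | hb2
      · rw [bdry_val] at hb2
        have v1 : p.val < y.val := h1
        have v2 : y.val < q.val := h2
        have v3 : q.val < a.val := h3
        omega
      · have hyb : y < b := hya.trans hab'
        exact noncrossG (Finset.pair_comm b y ▸ hb2) he
          ((crossG_iff hyb hpq).mpr (Or.inr ⟨h1, h2, h3.trans hab'⟩))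
  · -- b < y
    have vby : b.val < y.val := hby'
    have vyN := y.isLt
    have hay' : a < y := hab'.trans hby'
    rw [crossG_iff hay' hpq]
    rintro (⟨h1, h2, h3⟩ | ⟨h1, h2, h3⟩)
    · rcases lt_trichotomy p b with hpb | hpb | hpb
      · exact noncrossG hab he
          ((crossG_iff hab' hpq).mpr (Or.inl ⟨h1, hpb, hby'.trans h3⟩))
      · subst hpb
        have hqS : q ∈ S := by
          simp only [hS, Finset.mem_filter, Finset.mem_univ, true_and]
          exact ⟨Or.inr hpq, ne_of_lt hpq, Or.inr he⟩
        have hk := hymax q hqS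
        have k1 := keygt q hpq
        have k2 := keygt y hby'
        have v1 : y.val < q.val := h3
        omega
      · rcases hby with hb2 | hb2
        · rw [bdry_val] at hb2
          have v1 : b.val < p.val := hpb
          have v2 : p.val < y.val := h2
          have v3 : y.val < q.val := h3
          omega
        · exact noncrossG hb2 he
            ((crossG_iff hby' hpq).mpr (Or.inl ⟨hpb, h2, h3⟩))
    · rcases lt_trichotomy q b with hqb | hqb | hqb
      · exact noncrossG hab he ((crossG_iff hab' hpq).mpr (Or.inr ⟨h1, h2, hqb⟩))
      · rw [hqb] at he hpq
        have hpS : p ∈ S := by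
          simp only [hS, Finset.mem_filter, Finset.mem_univ, true_and]
          exact ⟨Or.inl h1, (ne_of_lt hpq).symm, Or.inr (Finset.pair_comm p b ▸ he)⟩
        have hk := hymax p hpS
        have k1 := keylt p h1
        have k2 := keygt y hby'
        have v1 : p.val < a.val := h1
        omega
      · rcases hby with hb2 | hb2
        · rw [bdry_val] at hb2
          have v1 : b.val < q.val := hqb
          have v2 : q.val < y.val := h3
          have v3 : p.val < a.val := h1
          have v4 : a.val < q.val := h2
          omega
        · exact noncrossG hb2 he
            ((crossG_iff hby' hpq).mpr (Or.inr ⟨h1.trans hab', hqb, h3⟩))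

end Apex


section Flip
variable {N : ℕ}

lemma flip_exists (T : Triangulation N) {z a x b : Fin N} (hz : z.val = 0)
    (ha1 : 1 ≤ a.val) (hax : a < x) (hxb : x < b)
    (hab : ({a, b} : Finset (Fin N)) ∈ T.diags)
    (eax : IsEdge T a x) (exb : IsEdge T x b)
    (eza : IsEdge T z a) (ezb : IsEdge T z b) :
    ∃ T' : Triangulation N, T'.diags = insert {x, z} (T.diags.erase {a, b}) := by
  classical
  have vax : a.val < x.val := hax
  have vxb : x.val < b.val := hxb
  have vbN := b.isLt
  have hza : z < a := by rw [Fin.lt_def]; omega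
  have hzx : z < x := by rw [Fin.lt_def]; omega
  have hzb : z < b := by rw [Fin.lt_def]; omega
  have hab' : a < b := by rw [Fin.lt_def]; omega
  have hC : Crosses ({z, x} : Finset (Fin N)) {a, b} :=
    ⟨z, x, a, b, rfl, rfl, hza, hax, hxb⟩
  have neax : ({a, x} : Finset (Fin N)) ≠ {a, b} := by
    intro h
    rcases pair_eq_cases h (ne_of_lt hax) with ⟨-, h2⟩ | ⟨h2, -⟩ <;>
      (have := congrArg Fin.val h2; omega)
  have nexb : ({x, b} : Finset (Fin N)) ≠ {a, b} := by
    intro h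
    rcases pair_eq_cases h (ne_of_lt hxb) with ⟨h2, -⟩ | ⟨-, h2⟩ <;>
      (have := congrArg Fin.val h2; omega)
  have neza : ({z, a} : Finset (Fin N)) ≠ {a, b} := by
    intro h
    rcases pair_eq_cases h (ne_of_lt hza) with ⟨h2, -⟩ | ⟨h2, -⟩ <;>
      (have := congrArg Fin.val h2; omega)
  have nezb : ({z, b} : Finset (Fin N)) ≠ {a, b} := by
    intro h
    rcases pair_eq_cases h (ne_of_lt hzb) with ⟨h2, -⟩ | ⟨h2, -⟩ <;>
      (have := congrArg Fin.val h2; omega)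
  have hxzdiag : IsDiag N ({x, z} : Finset (Fin N)) := by
    refine ⟨x, z, ?_, ?_, rfl⟩
    · intro h; have := congrArg Fin.val h; omega
    · rw [bdry_val]; omega
  have hcross : ∀ e ∈ T.diags, e ≠ ({a, b} : Finset (Fin N)) →
      ¬ CrossG ({z, x} : Finset (Fin N)) e := by
    intro e he hne
    obtain ⟨p, q, hpq, hbpq, rfl⟩ := isDiag_pair (T.isDiag e he)
    have vpq : p.val < q.val := hpq
    have vqN := q.isLt
    rw [crossG_iff hzx hpq]
    rintro (⟨h1, h2, h3⟩ | ⟨h1, -, -⟩)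
    swap
    · have : p.val < z.val := h1; omega
    have v1 : z.val < p.val := h1
    have v2 : p.val < x.val := h2
    have v3 : x.val < q.val := h3
    rcases lt_trichotomy p a with hpa | hpa | hpa
    · have vpa : p.val < a.val := hpa
      rcases eza with ⟨-, hE | hE⟩
      · rw [bdry_val] at hE; omega
      · exact noncrossG hE he
          ((crossG_iff hza hpq).mpr (Or.inl ⟨h1, hpa, by rw [Fin.lt_def]; omega⟩))
    · have he' : ({a, q} : Finset (Fin N)) ∈ T.diags := by rw [hpa] at he; exact he
      have haq : a < q := by rw [Fin.lt_def]; omega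
      rcases lt_trichotomy q b with hqb | hqb | hqb
      · have vqb : q.val < b.val := hqb
        rcases exb with ⟨-, hE | hE⟩
        · rw [bdry_val] at hE; omega
        · exact noncrossG hE he'
            ((crossG_iff hxb haq).mpr (Or.inr ⟨hax, h3, hqb⟩))
      · exact hne (by rw [hpa, hqb])
      · have vbq : b.val < q.val := hqb
        rcases ezb with ⟨-, hE | hE⟩
        · rw [bdry_val] at hE; omega
        · exact noncrossG hE he'
            ((crossG_iff hzb haq).mpr (Or.inl ⟨hza, hab', hqb⟩))
    · have vap : a.val < p.val := hpa
      rcases eax with ⟨-, hE | hE⟩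
      · rw [bdry_val] at hE; omega
      · exact noncrossG hE he ((crossG_iff hax hpq).mpr (Or.inl ⟨hpa, h2, h3⟩))
  refine ⟨⟨insert {x, z} (T.diags.erase {a, b}), ?_, ?_, ?_⟩, rfl⟩
  · intro e he
    rcases Finset.mem_insert.mp he with rfl | he'
    · exact hxzdiag
    · exact T.isDiag e (Finset.mem_of_mem_erase he')
  · intro e he f hf
    rcases Finset.mem_insert.mp he with rfl | he' <;>
      rcases Finset.mem_insert.mp hf with h' | hf'
    · rw [h']
      intro hcr
      rw [Finset.pair_comm x z] at hcr
      exact absurd (crosses_pattern hzx hzx hcr).1 (lt_irrefl _)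
    · intro hcr
      refine hcross f (Finset.mem_of_mem_erase hf') (Finset.ne_of_mem_erase hf')
        (Or.inl ?_)
      rwa [Finset.pair_comm x z] at hcr
    · rw [h']
      intro hcr
      refine hcross e (Finset.mem_of_mem_erase he') (Finset.ne_of_mem_erase he')
        (Or.inr ?_)
      rwa [Finset.pair_comm x z] at hcr
    · exact T.noncross e (Finset.mem_of_mem_erase he') f (Finset.mem_of_mem_erase hf')
  · intro f hfd hf
    have hfxz := hf {x, z} (Finset.mem_insert_self _ _)
    by_cases hfab : CrossG f ({a, b} : Finset (Fin N))
    · obtain ⟨p, q, hpq, hbpq, rfl⟩ := isDiag_pair hfd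
      have vpq : p.val < q.val := hpq
      have vqN := q.isLt
      have hferase : ∀ e ∈ T.diags, e ≠ ({a, b} : Finset (Fin N)) →
          ¬ CrossG ({p, q} : Finset (Fin N)) e := by
        intro e he hne' hcr
        have hmem : e ∈ insert ({x, z} : Finset (Fin N)) (T.diags.erase {a, b}) :=
          Finset.mem_insert_of_mem (Finset.mem_erase.mpr ⟨hne', he⟩)
        rcases hcr with h | h
        · exact (hf e hmem).1 h
        · exact (hf e hmem).2 h
      rcases (crossG_iff hpq hab').mp hfab with ⟨h1, h2, h3⟩ | ⟨h1, h2, h3⟩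
      · -- p < a < q < b
        have v1 : p.val < a.val := h1
        have v2 : a.val < q.val := h2
        have v3 : q.val < b.val := h3
        rcases lt_trichotomy q x with hqx | hqx | hqx
        · exfalso
          have v4 : q.val < x.val := hqx
          rcases eax with ⟨-, hE | hE⟩
          · rw [bdry_val] at hE; omega
          · exact hferase _ hE neax ((crossG_iff hpq hax).mpr (Or.inl ⟨h1, h2, hqx⟩))
        · by_cases hpz : p = z
          · rw [hpz, hqx, Finset.pair_comm z x]
            exact Finset.mem_insert_self _ _
          · exfalso
            have vpz : p.val ≠ 0 := fun hc => hpz (Fin.ext (by omega))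
            have hzp : z < p := by rw [Fin.lt_def]; omega
            rcases eza with ⟨-, hE | hE⟩
            · rw [bdry_val] at hE; omega
            · exact hferase _ hE neza
                ((crossG_iff hpq hza).mpr (Or.inr ⟨hzp, h1, by rw [hqx]; exact hax⟩))
        · exfalso
          have v4 : x.val < q.val := hqx
          rcases exb with ⟨-, hE | hE⟩
          · rw [bdry_val] at hE; omega
          · exact hferase _ hE nexb
              ((crossG_iff hpq hxb).mpr (Or.inl ⟨h1.trans hax, hqx, h3⟩))
      · -- a < p < b < q
        have v1 : a.val < p.val := h1
        have v2 : p.val < b.val := h2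
        have v3 : b.val < q.val := h3
        exfalso
        rcases lt_trichotomy p x with hpx | hpx | hpx
        · have v4 : p.val < x.val := hpx
          rcases eax with ⟨-, hE | hE⟩
          · rw [bdry_val] at hE; omega
          · exact hferase _ hE neax
              ((crossG_iff hpq hax).mpr (Or.inr ⟨h1, hpx, hxb.trans h3⟩))
        · have hzp : z < p := by rw [Fin.lt_def]; omega
          rcases ezb with ⟨-, hE | hE⟩
          · rw [bdry_val] at hE; omega
          · exact hferase _ hE nezb
              ((crossG_iff hpq hzb).mpr (Or.inr ⟨hzp, h2, h3⟩))
        · have v4 : x.val < p.val := hpx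
          rcases exb with ⟨-, hE | hE⟩
          · rw [bdry_val] at hE; omega
          · exact hferase _ hE nexb
              ((crossG_iff hpq hxb).mpr (Or.inr ⟨hpx, h2, h3⟩))
    · have hfT : f ∈ T.diags := by
        refine T.maximal f hfd ?_
        intro e he
        by_cases hne : e = ({a, b} : Finset (Fin N))
        · rw [hne]
          exact ⟨fun h => hfab (Or.inl h), fun h => hfab (Or.inr h)⟩
        · exact hf e (Finset.mem_insert_of_mem (Finset.mem_erase.mpr ⟨hne, he⟩))
      by_cases hfab2 : f = ({a, b} : Finset (Fin N))
      · exfalso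
        refine hfxz.2 ?_
        rw [hfab2]
        rwa [Finset.pair_comm x z]
      · exact Finset.mem_insert_of_mem (Finset.mem_erase.mpr ⟨hfab2, hfT⟩)

end Flip


section Data
variable {N : ℕ}

/-- The data of an (uncoloured) diagonal flip replacing `{a,b}` by `{x,y}`. -/
structure FlipData (T T' : Triangulation N) (a b x y : Fin N) : Prop where
  hab : ({a, b} : Finset (Fin N)) ∈ T.diags
  hd' : T'.diags = insert {x, y} (T.diags.erase {a, b})
  hd : T.diags = insert {a, b} (T'.diags.erase {x, y})
  nedge : ¬ IsEdge T x y
  nedge' : ¬ IsEdge T' a b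
  t1 : IsTriangle T {a, b, x}
  t2 : IsTriangle T {a, b, y}
  t1' : IsTriangle T' {a, x, y}
  t2' : IsTriangle T' {b, x, y}
  nxy : x ≠ y
  nab : a ≠ b

lemma triple_rot {α : Type*} [DecidableEq α] (u v w : α) :
    ({u, v, w} : Finset α) = {w, u, v} := by
  ext s; simp; tauto

lemma FlipData.symm {T T' : Triangulation N} {a b x y : Fin N}
    (F : FlipData T T' a b x y) : FlipData T' T x y a b := by
  refine ⟨F.hd' ▸ Finset.mem_insert_self _ _, F.hd, F.hd', F.nedge', F.nedge,
    ?_, ?_, ?_, ?_, F.nab, F.nxy⟩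
  · rw [show ({x, y, a} : Finset (Fin N)) = {a, x, y} from triple_rot x y a]
    exact F.t1'
  · rw [show ({x, y, b} : Finset (Fin N)) = {b, x, y} from triple_rot x y b]
    exact F.t2'
  · rw [show ({x, a, b} : Finset (Fin N)) = {a, b, x} from (triple_rot a b x).symm]
    exact F.t1
  · rw [show ({y, a, b} : Finset (Fin N)) = {a, b, y} from (triple_rot a b y).symm]
    exact F.t2

lemma build_flipdata {T T' : Triangulation N} {z a x b : Fin N} (hz : z.val = 0)
    (ha1 : 1 ≤ a.val) (hax : a < x) (hxb : x < b)
    (hab : ({a, b} : Finset (Fin N)) ∈ T.diags)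
    (eax : IsEdge T a x) (exb : IsEdge T x b)
    (eza : IsEdge T z a) (ezb : IsEdge T z b)
    (hd' : T'.diags = insert {x, z} (T.diags.erase {a, b})) :
    FlipData T T' a b x z := by
  have vax : a.val < x.val := hax
  have vxb : x.val < b.val := hxb
  have vbN := b.isLt
  have hza : z < a := by rw [Fin.lt_def]; omega
  have hzx : z < x := by rw [Fin.lt_def]; omega
  have hab' : a < b := by rw [Fin.lt_def]; omega
  have nab : a ≠ b := ne_of_lt hab'
  have nxz : x ≠ z := by intro h; have := congrArg Fin.val h; omega
  have hxz_notmem : ({x, z} : Finset (Fin N)) ∉ T.diags := by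
    intro hmem
    exact T.noncross _ hmem _ hab
      (Finset.pair_comm x z ▸ (⟨z, x, a, b, rfl, rfl, hza, hax, hxb⟩ :
        Crosses ({z, x} : Finset (Fin N)) {a, b}))
  have nedge : ¬ IsEdge T x z := by
    rintro ⟨-, hE | hE⟩
    · rw [bdry_val] at hE; omega
    · exact hxz_notmem hE
  have hd : T.diags = insert {a, b} (T'.diags.erase {x, z}) := by
    rw [hd', Finset.erase_insert, Finset.insert_erase hab]
    intro hmem
    exact hxz_notmem (Finset.mem_of_mem_erase hmem)
  have edge_transfer : ∀ u v : Fin N, IsEdge T u v →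
      ({u, v} : Finset (Fin N)) ≠ {a, b} → IsEdge T' u v := by
    rintro u v ⟨h1, h2 | h2⟩ hne
    · exact ⟨h1, Or.inl h2⟩
    · exact ⟨h1, Or.inr (hd' ▸ Finset.mem_insert_of_mem (Finset.mem_erase.mpr ⟨hne, h2⟩))⟩
  have neax : ({a, x} : Finset (Fin N)) ≠ {a, b} := by
    intro h
    rcases pair_eq_cases h (ne_of_lt hax) with ⟨-, h2⟩ | ⟨h2, -⟩ <;>
      (have := congrArg Fin.val h2; omega)
  have nexb : ({x, b} : Finset (Fin N)) ≠ {a, b} := by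
    intro h
    rcases pair_eq_cases h (ne_of_lt hxb) with ⟨h2, -⟩ | ⟨-, h2⟩ <;>
      (have := congrArg Fin.val h2; omega)
  have neza : ({z, a} : Finset (Fin N)) ≠ {a, b} := by
    intro h
    rcases pair_eq_cases h (ne_of_lt hza) with ⟨h2, -⟩ | ⟨h2, -⟩ <;>
      (have := congrArg Fin.val h2; omega)
  have nezb : ({z, b} : Finset (Fin N)) ≠ {a, b} := by
    intro h
    rcases pair_eq_cases h (ne_of_lt (hza.trans hab')) with ⟨h2, -⟩ | ⟨h2, -⟩ <;>
      (have := congrArg Fin.val h2; omega)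
  have exz' : IsEdge T' x z := ⟨nxz, Or.inr (hd' ▸ Finset.mem_insert_self _ _)⟩
  refine ⟨hab, hd', hd, nedge, ?_, ?_, ?_, ?_, ?_, nxz, nab⟩
  · -- ¬ IsEdge T' a b
    rintro ⟨-, hE | hE⟩
    · exact notbdry_of_mem hab nab hE
    · rw [hd'] at hE
      rcases Finset.mem_insert.mp hE with h | h
      · rcases pair_eq_cases h nab with ⟨h2, -⟩ | ⟨-, h2⟩ <;>
          (have := congrArg Fin.val h2; omega)
      · exact (Finset.mem_erase.mp h).1 rfl
  · exact ⟨a, b, x, nab, ne_of_lt hax, (ne_of_lt hxb).symm, rfl,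
      ⟨nab, Or.inr hab⟩, eax, isEdge_symm exb⟩
  · exact ⟨a, b, z, nab, (ne_of_lt hza).symm, (ne_of_lt (hza.trans hab')).symm, rfl,
      ⟨nab, Or.inr hab⟩, isEdge_symm eza, isEdge_symm ezb⟩
  · exact ⟨a, x, z, ne_of_lt hax, (ne_of_lt hza).symm, nxz, rfl,
      edge_transfer a x eax neax,
      edge_transfer a z (isEdge_symm eza) (by rwa [Finset.pair_comm a z]), exz'⟩
  · exact ⟨b, x, z, (ne_of_lt hxb).symm, (ne_of_lt (hza.trans hab')).symm, nxz, rfl,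
      edge_transfer b x (isEdge_symm exb) (by rwa [Finset.pair_comm b x]),
      edge_transfer b z (isEdge_symm ezb) (by rwa [Finset.pair_comm b z]), exz'⟩

end Data


section Chain
variable {N m : ℕ}

open Finset

/-- Auxiliary colouring: the two named triangles get colour `(σ^k) c`, all others `c`. -/
def colF (σ : Equiv.Perm (Fin m)) (c : Fin m) (U : Triangulation N) (k : ℕ)
    (S₁ S₂ : Finset (Fin N)) : {t : Finset (Fin N) // IsTriangle U t} → Fin m :=
  fun t => if t.1 = S₁ ∨ t.1 = S₂ then (σ ^ k) c else c

lemma step_flip (σ : Equiv.Perm (Fin m)) (c : Fin m) {T T' : Triangulation N}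
    {a b x y : Fin N} (F : FlipData T T' a b x y) (k : ℕ) :
    SFlipAt σ {a, b} ⟨T, colF σ c T k {a, b, x} {a, b, y}⟩
      ⟨T', colF σ c T' (k + 1) {a, x, y} {b, x, y}⟩ := by
  classical
  refine ⟨a, b, x, y, F.t1, F.t2, F.t1', F.t2', rfl, F.hab, F.nxy, ?_, F.hd', ?_, ?_, ?_⟩
  · show (if _ then _ else _) = (if _ then _ else _)
    rw [if_pos (Or.inl rfl), if_pos (Or.inr rfl)]
  · show (if _ then _ else _) = σ (if _ then _ else _)
    rw [if_pos (Or.inl rfl), if_pos (Or.inl rfl), pow_succ', Equiv.Perm.mul_apply]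
  · show (if _ then _ else _) = σ (if _ then _ else _)
    rw [if_pos (Or.inr rfl), if_pos (Or.inl rfl), pow_succ', Equiv.Perm.mul_apply]
  · intro t ht ht' hta htb
    have h1 : t ≠ ({a, x, y} : Finset (Fin N)) := by
      rintro rfl
      exact F.nedge (tri_edges ht (by simp) (by simp) F.nxy)
    have h2 : t ≠ ({b, x, y} : Finset (Fin N)) := by
      rintro rfl
      exact F.nedge (tri_edges ht (by simp) (by simp) F.nxy)
    show (if _ then _ else _) = (if _ then _ else _)
    rw [if_neg (by tauto), if_neg (by tauto)]

lemma colF_const (σ : Equiv.Perm (Fin m)) (c : Fin m) (U : Triangulation N)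
    {k : ℕ} (h : (σ ^ k) c = c) (S₁ S₂ : Finset (Fin N)) :
    colF σ c U k S₁ S₂ = fun _ => c := by
  funext t
  simp only [colF, h, ite_self]

lemma flip_chain (σ : Equiv.Perm (Fin m)) (c : Fin m) (hodd : Odd m)
    (hpow : σ ^ m = 1) {T T' : Triangulation N} {a b x y : Fin N}
    (F : FlipData T T' a b x y) :
    Relation.ReflTransGen (SFlip σ)
      ⟨T, fun _ => c⟩ ⟨T', fun _ => c⟩ := by
  classical
  set seq : ℕ → ColouredTri N m := fun k =>
    if k % 2 = 0 then ⟨T, colF σ c T k {a, b, x} {a, b, y}⟩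
    else ⟨T', colF σ c T' k {a, x, y} {b, x, y}⟩ with hseq
  have hstep : ∀ k, SFlip σ (seq k) (seq (k + 1)) := by
    intro k
    rcases Nat.even_or_odd k with hk | hk
    · have h0 : k % 2 = 0 := Nat.even_iff.mp hk
      have h1 : (k + 1) % 2 = 1 := by omega
      rw [hseq]
      simp only [h0, h1, if_pos, if_neg (by omega : ¬(1 = 0))]
      exact ⟨{a, b}, step_flip σ c F k⟩
    · have h0 : k % 2 = 1 := Nat.odd_iff.mp hk
      have h1 : (k + 1) % 2 = 0 := by omega
      rw [hseq]
      simp only [h0, h1, if_pos, if_neg (by omega : ¬(1 = 0))]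
      have := step_flip σ c F.symm k
      rw [show ({x, y, a} : Finset (Fin N)) = {a, x, y} from triple_rot x y a,
        show ({x, y, b} : Finset (Fin N)) = {b, x, y} from triple_rot x y b,
        show ({x, a, b} : Finset (Fin N)) = {a, b, x} from (triple_rot a b x).symm,
        show ({y, a, b} : Finset (Fin N)) = {a, b, y} from (triple_rot a b y).symm] at this
      exact ⟨{x, y}, this⟩
  have hchain : ∀ n, Relation.ReflTransGen (SFlip σ) (seq 0) (seq n) := by
    intro n
    induction n with
    | zero => exact Relation.ReflTransGen.refl
    | succ n ih => exact ih.tail (hstep n)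
  have h0 : seq 0 = ⟨T, fun _ => c⟩ := by
    simp only [hseq]
    rw [if_pos trivial]
    exact congrArg (ColouredTri.mk T) (colF_const σ c T (by simp) _ _)
  have hm : seq m = ⟨T', fun _ => c⟩ := by
    have hm1 : m % 2 = 1 := Nat.odd_iff.mp hodd
    simp only [hseq]
    rw [if_neg (by omega : ¬ m % 2 = 0)]
    exact congrArg (ColouredTri.mk T') (colF_const σ c T' (by rw [hpow]; rfl) _ _)
  rw [← h0, ← hm]
  exact hchain m

end Chain


section Progress
variable {N : ℕ}

lemma progress (z : Fin N) (hz : z.val = 0) (T : Triangulation N)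
    (h : (T.diags.filter (fun d => z ∉ d)).card ≠ 0) :
    ∃ (T' : Triangulation N) (a b x : Fin N), FlipData T T' a b x z ∧
      (T'.diags.filter (fun d => z ∉ d)).card + 1
        = (T.diags.filter (fun d => z ∉ d)).card := by
  classical
  set S := T.diags.filter (fun d => z ∉ d) with hS
  have hSne : S.Nonempty := Finset.nonempty_iff_ne_empty.mpr
    (fun hh => h (by rw [hh]; rfl))
  set f : Finset (Fin N) → ℕ := fun s =>
    if hs : s.Nonempty then N + (s.min' hs).val - (s.max' hs).val else 0 with hf
  obtain ⟨d, hdS, hmin⟩ := S.exists_min_image f hSne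
  rw [hS, Finset.mem_filter] at hdS
  obtain ⟨hdT, hzd⟩ := hdS
  obtain ⟨a, b, hab', hbd, rfl⟩ := isDiag_pair (T.isDiag _ hdT)
  have vab : a.val < b.val := hab'
  have vbN := b.isLt
  have hzab : z ≠ a ∧ z ≠ b := by
    simpa only [Finset.mem_insert, Finset.mem_singleton, not_or] using hzd
  have ha1 : 1 ≤ a.val := by
    rcases Nat.eq_zero_or_pos a.val with h0 | h0
    · exact absurd (Fin.ext (by omega) : z = a) hzab.1
    · omega
  have hb3 : 3 ≤ b.val := by
    rw [bdry_val] at hbd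
    omega
  have hab2 : a.val + 2 ≤ b.val := by
    rw [bdry_val] at hbd
    omega
  have fpair : ∀ u v : Fin N, u < v → f {u, v} = N + u.val - v.val := by
    intro u v huv
    have hne : ({u, v} : Finset (Fin N)).Nonempty := ⟨u, by simp⟩
    have hdif : f {u, v}
        = N + (({u, v} : Finset (Fin N)).min' hne).val
          - (({u, v} : Finset (Fin N)).max' hne).val := dif_pos hne
    have hmin' : ({u, v} : Finset (Fin N)).min' hne = u := by
      have h1 := Finset.min'_mem ({u, v} : Finset (Fin N)) hne
      have h2 := Finset.min'_le ({u, v} : Finset (Fin N)) u (by simp)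
      simp only [Finset.mem_insert, Finset.mem_singleton] at h1
      rcases h1 with h1 | h1
      · exact h1
      · exfalso; rw [h1] at h2; exact absurd h2 (not_le.mpr huv)
    have hmax' : ({u, v} : Finset (Fin N)).max' hne = v := by
      have h1 := Finset.max'_mem ({u, v} : Finset (Fin N)) hne
      have h2 := Finset.le_max' ({u, v} : Finset (Fin N)) v (by simp)
      simp only [Finset.mem_insert, Finset.mem_singleton] at h1
      rcases h1 with h1 | h1
      · exfalso; rw [h1] at h2; exact absurd h2 (not_le.mpr huv)
      · exact h1
    rw [hdif, hmin', hmax']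
  obtain ⟨x, hax, hxb, eax, exb⟩ := exists_inner_apex T hdT hab2
  obtain ⟨y, hy, eay, eby⟩ := exists_outer_apex T hdT ha1 hab2
  have hyz : y = z := by
    by_contra hne
    have hyz' : y.val ≠ 0 := fun hc => hne (Fin.ext (by omega))
    have hyN := y.isLt
    rcases hy with hya | hby
    · have vya : y.val < a.val := hya
      have hmemT : ({y, b} : Finset (Fin N)) ∈ T.diags := by
        obtain ⟨-, hE | hE⟩ := eby
        · exfalso; rw [bdry_val] at hE; omega
        · rw [Finset.pair_comm y b]; exact hE
      have hSm : ({y, b} : Finset (Fin N)) ∈ S := by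
        rw [hS, Finset.mem_filter]
        refine ⟨hmemT, ?_⟩
        simp only [Finset.mem_insert, Finset.mem_singleton, not_or]
        exact ⟨fun hc => by have := congrArg Fin.val hc; omega,
          fun hc => by have := congrArg Fin.val hc; omega⟩
      have hle := hmin _ hSm
      rw [fpair a b hab', fpair y b (hya.trans hab')] at hle
      omega
    · have vby : b.val < y.val := hby
      have hmemT : ({a, y} : Finset (Fin N)) ∈ T.diags := by
        obtain ⟨-, hE | hE⟩ := eay
        · exfalso; rw [bdry_val] at hE; omega
        · exact hE
      have hSm : ({a, y} : Finset (Fin N)) ∈ S := by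
        rw [hS, Finset.mem_filter]
        refine ⟨hmemT, ?_⟩
        simp only [Finset.mem_insert, Finset.mem_singleton, not_or]
        exact ⟨fun hc => by have := congrArg Fin.val hc; omega,
          fun hc => by have := congrArg Fin.val hc; omega⟩
      have hle := hmin _ hSm
      rw [fpair a b hab', fpair a y (hab'.trans hby)] at hle
      omega
  rw [hyz] at eay eby
  obtain ⟨T', hd'⟩ := flip_exists T hz ha1 hax hxb hdT eax exb
    (isEdge_symm eay) (isEdge_symm eby)
  refine ⟨T', a, b, x,
    build_flipdata hz ha1 hax hxb hdT eax exb (isEdge_symm eay) (isEdge_symm eby) hd',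
    ?_⟩
  have hmemF : ({a, b} : Finset (Fin N)) ∈ T.diags.filter (fun d => z ∉ d) :=
    Finset.mem_filter.mpr ⟨hdT, hzd⟩
  have hpos := Finset.card_pos.mpr ⟨_, hmemF⟩
  rw [hd', Finset.filter_insert, if_neg (by simp : ¬ z ∉ ({x, z} : Finset (Fin N))),
    Finset.filter_erase, Finset.card_erase_of_mem hmemF]
  rw [hS]
  omega

end Progress

/-- If `σ` is a single `m`-cycle on the `m` colours and `m` is odd, then any two
triangulations of the convex polygon, each with all triangles given the same
colour `c`, are connected by a sequence of `σ`-flips. -/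
theorem odd_cycle_constant_colourings_connected (m : ℕ) (hm : Odd m)
    (σ : Equiv.Perm (Fin m)) (hσ : σ.IsCycle) (hsupp : σ.support = Finset.univ)
    (N : ℕ) (T₁ T₂ : Triangulation N) (c : Fin m) :
    Relation.ReflTransGen (SFlip σ)
      ⟨T₁, fun _ => c⟩ ⟨T₂, fun _ => c⟩ := by
  classical
  have hσm : σ ^ m = 1 := by
    have h1 : orderOf σ = m := by
      rw [hσ.orderOf, hsupp, Finset.card_univ, Fintype.card_fin]
    have h2 := pow_orderOf_eq_one σ
    rwa [h1] at h2
  rcases Nat.eq_zero_or_pos N with hN | hN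
  · subst hN
    have hdz : ∀ T : Triangulation 0, T.diags = ∅ := by
      intro T
      rw [Finset.eq_empty_iff_forall_notMem]
      intro d hd
      obtain ⟨i, -⟩ := T.isDiag d hd
      exact i.elim0
    have hT : T₁ = T₂ := triangulation_ext ((hdz T₁).trans (hdz T₂).symm)
    subst hT
    exact Relation.ReflTransGen.refl
  · set z : Fin N := ⟨0, hN⟩ with hzdef
    have hz : z.val = 0 := rfl
    set cnt : Triangulation N → ℕ :=
      fun T => (T.diags.filter (fun d => z ∉ d)).card with hcnt
    have eqcase : ∀ S₁ S₂ : Triangulation N, cnt S₁ = 0 → cnt S₂ = 0 → S₁ = S₂ := by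
      intro S₁ S₂ h₁ h₂
      have hall : ∀ (S : Triangulation N), cnt S = 0 → ∀ d ∈ S.diags, z ∈ d := by
        intro S hc0 d hd
        by_contra hzd
        have hmem : d ∈ S.diags.filter (fun d => z ∉ d) :=
          Finset.mem_filter.mpr ⟨hd, hzd⟩
        rw [hcnt] at hc0
        rw [Finset.card_eq_zero.mp hc0] at hmem
        exact absurd hmem (Finset.notMem_empty d)
      have sub : ∀ A B : Triangulation N, (∀ d ∈ A.diags, z ∈ d) →
          (∀ d ∈ B.diags, z ∈ d) → A.diags ⊆ B.diags := by
        intro A B hA hB d hd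
        refine B.maximal d (A.isDiag d hd) ?_
        intro e he
        exact ⟨nocross_shared hz (hA d hd) (hB e he),
          nocross_shared hz (hB e he) (hA d hd)⟩
      exact triangulation_ext (Finset.Subset.antisymm
        (sub S₁ S₂ (hall S₁ h₁) (hall S₂ h₂)) (sub S₂ S₁ (hall S₂ h₂) (hall S₁ h₁)))
    have main : ∀ (n : ℕ) (S₁ S₂ : Triangulation N), cnt S₁ + cnt S₂ ≤ n →
        Relation.ReflTransGen (SFlip σ) ⟨S₁, fun _ => c⟩ ⟨S₂, fun _ => c⟩ := by
      intro n
      induction n with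
      | zero =>
        intro S₁ S₂ hle
        have h := eqcase S₁ S₂ (by omega) (by omega)
        subst h
        exact Relation.ReflTransGen.refl
      | succ n ih =>
        intro S₁ S₂ hle
        by_cases h₁ : cnt S₁ = 0
        · by_cases h₂ : cnt S₂ = 0
          · have h := eqcase S₁ S₂ h₁ h₂
            subst h
            exact Relation.ReflTransGen.refl
          · obtain ⟨S₂', a, b, x, F, hc⟩ := progress z hz S₂ (by rwa [hcnt] at h₂)
            have hc' : cnt S₂' + 1 = cnt S₂ := by rw [hcnt]; exact hc
            exact (ih S₁ S₂' (by omega)).trans (flip_chain σ c hm hσm F.symm)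
        · obtain ⟨S₁', a, b, x, F, hc⟩ := progress z hz S₁ (by rwa [hcnt] at h₁)
          have hc' : cnt S₁' + 1 = cnt S₁ := by rw [hcnt]; exact hc
          exact (flip_chain σ c hm hσm F).trans (ih S₁' S₂ (by omega))
    exact main (cnt T₁ + cnt T₂) T₁ T₂ le_rfl


end PolyFlip
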